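/- Let E and F be Banach lattices whose Fremlin tensor product E ⊗̄ F is Dedekind complete, and let (B_α)_{α∈I}, (C_β)_{β∈J} be dense band decompositions of E and F respectively. Then the family (B_α ⊗̂ C_β)_{(α,β)∈I×J} is a dense band decomposition of E ⊗̂ F: its members are pairwise disjoint projection bands whose linear span is norm dense in E ⊗̂ F. -/

import Mathlib

open Filter Topology

/-- The sublattice-submodule of `G` generated by a set `s`. -/
def latticeSpan {G : Type*} [Lattice G] [AddCommGroup G] [Module ℝ G] (s : Set G) : Set G :=
  {x | ∀ p : Submodule ℝ G, s ⊆ p → (∀ a ∈ (p : Set G), ∀ b ∈ (p : Set G), a ⊔ b ∈ p) → x ∈ p}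

/-- `t` realizes the Banach lattice `G` as the Fremlin projective tensor
product `E ⊗̂ F`: a bilinear lattice bimorphism whose norm is the (cross)
Fremlin projective norm and whose image spans a dense subspace, satisfying
Fremlin's lattice estimate. -/
structure IsFremlinProjTensor (E F G : Type*)
    [NormedAddCommGroup E] [Lattice E] [HasSolidNorm E] [IsOrderedAddMonoid E] [NormedSpace ℝ E]
    [NormedAddCommGroup F] [Lattice F] [HasSolidNorm F] [IsOrderedAddMonoid F] [NormedSpace ℝ F]
    [NormedAddCommGroup G] [Lattice G] [HasSolidNorm G] [IsOrderedAddMonoid G] [NormedSpace ℝ G] [CompleteSpace G]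
    (t : E →ₗ[ℝ] F →ₗ[ℝ] G) : Prop where
  abs_tensor : ∀ x y, |t x y| = t |x| |y|
  pos_pos : ∀ x y, 0 < x → 0 < y → 0 < t x y
  inf_tensor_le : ∀ x₀ x₁ y₀ y₁, 0 ≤ x₀ → 0 ≤ x₁ → 0 ≤ y₀ → 0 ≤ y₁ →
    (t x₀ y₀ ⊓ t x₁ y₁) ≤ t (x₀ ⊓ x₁) (y₀ ⊔ y₁)
  cross_norm : ∀ x y, ‖t x y‖ = ‖x‖ * ‖y‖
  dense_span : Dense (Submodule.span ℝ (Set.image2 (fun x y => t x y) Set.univ Set.univ) : Set G)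

/-- `u` is a quasi-interior point of the Banach lattice `G`: `u ≥ 0` and for
every `x ≥ 0`, `x ⊓ n•u → x` in norm (equivalently, the ideal generated by `u`
is norm dense). -/
def QuasiInteriorPoint {G : Type*} [NormedAddCommGroup G] [Lattice G] [HasSolidNorm G] [IsOrderedAddMonoid G] (u : G) : Prop :=
  0 ≤ u ∧ ∀ x : G, 0 ≤ x → Tendsto (fun n : ℕ => x ⊓ n • u) atTop (nhds x)

/-- `P` is a band projection on the vector lattice `G`. -/
structure IsBandProjection {G : Type*} [Lattice G] [AddCommGroup G] [Module ℝ G]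
    (P : G →ₗ[ℝ] G) : Prop where
  idem : ∀ x, P (P x) = P x
  pos : ∀ x, 0 ≤ x → 0 ≤ P x
  proj_le : ∀ x, 0 ≤ x → P x ≤ x
  disj : ∀ x, |P x| ⊓ |x - P x| = 0

/-- A family of subsets of a Banach lattice is a dense band decomposition if
its members are pairwise disjoint projection bands whose linear span is norm
dense. -/
def IsDenseBandDecomposition {G : Type*} [NormedAddCommGroup G] [Lattice G] [HasSolidNorm G] [IsOrderedAddMonoid G]
    [NormedSpace ℝ G] {ι : Type*} (D : ι → Set G) : Prop :=
  (∀ i, ∃ P : G →ₗ[ℝ] G, IsBandProjection P ∧ Set.range P = D i) ∧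
    (∀ i j, i ≠ j → ∀ a ∈ D i, ∀ b ∈ D j, |a| ⊓ |b| = 0) ∧
    Dense (Submodule.span ℝ (⋃ i, D i) : Set G)


section LatticeAux

variable {α : Type*} [NormedAddCommGroup α] [Lattice α] [HasSolidNorm α] [IsOrderedAddMonoid α]

lemma ls_habs (x : α) : |x| = x ⊔ -x := rfl

lemma ls_inf_add {a b c : α} (ha : 0 ≤ a) (hb : 0 ≤ b) (hc : 0 ≤ c) :
    a ⊓ (b + c) ≤ a ⊓ b + a ⊓ c := by
  have h1 : a ⊓ (b + c) ≤ a ⊓ b + c := by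
    have h2 : a ⊓ (b + c) ≤ (a + c) ⊓ (b + c) :=
      le_inf (le_trans inf_le_left (le_add_of_nonneg_right hc)) inf_le_right
    calc a ⊓ (b + c) ≤ (a + c) ⊓ (b + c) := h2
      _ = a ⊓ b + c := by rw [inf_add]
  have h3 : a ⊓ (b + c) - a ⊓ b ≤ c := sub_le_iff_le_add'.2 h1
  have h4 : a ⊓ (b + c) - a ⊓ b ≤ a :=
    le_trans (sub_le_self _ (le_inf ha hb)) inf_le_left
  have h5 : a ⊓ (b + c) - a ⊓ b ≤ a ⊓ c := le_inf h4 h3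
  calc a ⊓ (b + c) = a ⊓ b + (a ⊓ (b + c) - a ⊓ b) := by abel
    _ ≤ a ⊓ b + a ⊓ c := add_le_add_right h5 _

lemma ls_disj_nonneg (u c : α) : 0 ≤ |u| ⊓ |c| := le_inf (abs_nonneg u) (abs_nonneg c)

lemma ls_disj_mono {u v c : α} (h : |u| ≤ |v|) (hv : |v| ⊓ |c| = 0) : |u| ⊓ |c| = 0 :=
  le_antisymm (le_trans (inf_le_inf_right _ h) hv.le) (ls_disj_nonneg u c)

lemma ls_disj_add {u v c : α} (hu : |u| ⊓ |c| = 0) (hv : |v| ⊓ |c| = 0) :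
    |u + v| ⊓ |c| = 0 := by
  have habs : |(|u| + |v|)| = |u| + |v| := abs_of_nonneg (add_nonneg (abs_nonneg u) (abs_nonneg v))
  refine ls_disj_mono ((abs_add_le u v).trans habs.symm.le) ?_
  rw [habs]
  refine le_antisymm ?_ (le_inf (add_nonneg (abs_nonneg u) (abs_nonneg v)) (abs_nonneg c))
  calc (|u| + |v|) ⊓ |c| = |c| ⊓ (|u| + |v|) := inf_comm _ _
    _ ≤ |c| ⊓ |u| + |c| ⊓ |v| := ls_inf_add (abs_nonneg c) (abs_nonneg u) (abs_nonneg v)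
    _ = 0 := by rw [inf_comm |c| |u|, inf_comm |c| |v|, hu, hv, add_zero]

lemma ls_disj_zero {c : α} : |(0 : α)| ⊓ |c| = 0 := by
  rw [abs_zero]; exact inf_eq_left.2 (abs_nonneg c)

lemma ls_disj_neg {u c : α} (hu : |u| ⊓ |c| = 0) : |(-u)| ⊓ |c| = 0 := by rwa [abs_neg]

lemma ls_disj_sub {u v c : α} (hu : |u| ⊓ |c| = 0) (hv : |v| ⊓ |c| = 0) :
    |u - v| ⊓ |c| = 0 := by
  rw [sub_eq_add_neg]; exact ls_disj_add hu (ls_disj_neg hv)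

lemma ls_disj_comm {u c : α} (hu : |u| ⊓ |c| = 0) : |c| ⊓ |u| = 0 := by
  rwa [inf_comm]

lemma ls_abs_sup_le (a b : α) : |a ⊔ b| ≤ |a| + |b| := by
  rw [ls_habs]
  refine sup_le (sup_le ?_ ?_) ?_
  · exact le_trans (le_abs_self a) (le_add_of_nonneg_right (abs_nonneg b))
  · exact le_trans (le_abs_self b) (le_add_of_nonneg_left (abs_nonneg a))
  · rw [neg_sup]
    exact le_trans inf_le_left (le_trans (neg_le_abs a) (le_add_of_nonneg_right (abs_nonneg b)))

lemma ls_disj_sup {u v c : α} (hu : |u| ⊓ |c| = 0) (hv : |v| ⊓ |c| = 0) :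
    |u ⊔ v| ⊓ |c| = 0 := by
  have h1 : |(|u|)| ⊓ |c| = 0 := by rwa [abs_abs]
  have h2 : |(|v|)| ⊓ |c| = 0 := by rwa [abs_abs]
  exact ls_disj_mono ((ls_abs_sup_le u v).trans (le_abs_self _)) (ls_disj_add h1 h2)

lemma ls_abs_add_self (v : α) : |v + v| = |v| + |v| := by
  refine le_antisymm (abs_add_le v v) ?_
  rw [ls_habs v, sup_add, add_sup, add_sup]
  refine sup_le (sup_le ?_ ?_) (sup_le ?_ ?_)
  · exact le_abs_self _
  · rw [add_neg_cancel]; exact abs_nonneg _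
  · rw [neg_add_cancel]; exact abs_nonneg _
  · rw [← neg_add]; exact neg_le_abs _

lemma ls_nonneg_of_disj {u v : α} (h : |u| ⊓ |v| = 0) (hsum : 0 ≤ u + v) : 0 ≤ u := by
  have hnu : -u ≤ v := by
    have : 0 ≤ v - -u := by rwa [sub_neg_eq_add, add_comm]
    exact sub_nonneg.1 this
  have h1 : u⁻ ≤ v⁺ := by
    rw [negPart_def, posPart_def]
    exact sup_le_sup_right hnu 0
  have h2 : v⁺ ≤ |v| := by
    rw [posPart_def]; exact sup_le (le_abs_self v) (abs_nonneg v)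
  have h3 : u⁻ ≤ |u| := by
    rw [negPart_def]; exact sup_le (neg_le_abs u) (abs_nonneg u)
  have h4 : u⁻ ≤ 0 := le_trans (le_inf h3 (h1.trans h2)) h.le
  have h5 : u⁻ = 0 := le_antisymm h4 (negPart_nonneg u)
  rw [← posPart_sub_negPart u, h5, sub_zero]
  exact posPart_nonneg u

lemma ls_abs_le_of_disj {u v : α} (h : |u| ⊓ |v| = 0) : |u| ≤ |u + v| := by
  have h1 : |u| ≤ |u + v| + |v| := by
    calc |u| = |u + v + -v| := by rw [add_neg_cancel_right]
      _ ≤ |u + v| + |(-v)| := abs_add_le _ _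
      _ = |u + v| + |v| := by rw [abs_neg]
  have h2 : |u| - |u + v| ≤ |v| := sub_le_iff_le_add'.2 h1
  have h3 : |u| - |u + v| ≤ |u| := sub_le_self _ (abs_nonneg _)
  have h4 : |u| - |u + v| ≤ 0 := le_trans (le_inf h3 h2) h.le
  exact sub_nonpos.1 h4

lemma ls_continuous_abs : Continuous (fun x : α => |x|) := by
  have : (fun x : α => |x|) = fun x : α => x ⊔ -x := rfl
  rw [this]
  exact continuous_id.sup continuous_neg

end LatticeAux

section SmulAux

variable {α : Type*} [NormedAddCommGroup α] [Lattice α] [HasSolidNorm α] [IsOrderedAddMonoid α] [NormedSpace ℝ α]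

lemma ls_disj_smul {u c : α} (hu : |u| ⊓ |c| = 0) (r : ℝ) : |r • u| ⊓ |c| = 0 := by
  classical
  let S : AddSubgroup ℝ :=
    { carrier := {s : ℝ | |s • u| ⊓ |c| = 0}
      zero_mem' := by
        show |(0 : ℝ) • u| ⊓ |c| = 0
        rw [zero_smul]; exact ls_disj_zero
      add_mem' := by
        intro s₁ s₂ h₁ h₂
        show |(s₁ + s₂) • u| ⊓ |c| = 0
        rw [add_smul]; exact ls_disj_add h₁ h₂
      neg_mem' := by
        intro s h
        show |(-s) • u| ⊓ |c| = 0
        rw [neg_smul]; exact ls_disj_neg h }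
  have hhalf : ∀ s : ℝ, s ∈ S → s / 2 ∈ S := by
    intro s hs
    have h2 : (s / 2) • u + (s / 2) • u = s • u := by
      rw [← add_smul]; norm_num
    have habs : |(s / 2) • u| ≤ |s • u| := by
      rw [← h2, ls_abs_add_self]
      exact le_add_of_nonneg_left (abs_nonneg _)
    exact ls_disj_mono habs hs
  have hone : (1 : ℝ) ∈ S := by
    show |(1 : ℝ) • u| ⊓ |c| = 0
    rwa [one_smul]
  have hpow : ∀ n : ℕ, ((1 : ℝ) / 2) ^ n ∈ S := by
    intro n
    induction n with
    | zero => simpa using hone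
    | succ n ih =>
      have : ((1 : ℝ) / 2) ^ (n + 1) = ((1 : ℝ) / 2) ^ n / 2 := by ring
      rw [this]; exact hhalf _ ih
  have hdense : Dense (S : Set ℝ) := by
    refine S.dense_of_not_isolated_zero fun ε hε => ?_
    obtain ⟨n, hn⟩ := exists_pow_lt_of_lt_one hε (by norm_num : (1 : ℝ) / 2 < 1)
    exact ⟨((1 : ℝ) / 2) ^ n, hpow n, by positivity, hn⟩
  have hclosed : IsClosed (S : Set ℝ) := by
    have hset : (S : Set ℝ) = {s : ℝ | |s • u| ⊓ |c| = 0} := rfl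
    rw [hset]
    have hcont : Continuous fun s : ℝ => |s • u| ⊓ |c| :=
      (ls_continuous_abs.comp (continuous_id.smul continuous_const)).inf continuous_const
    exact isClosed_eq hcont continuous_const
  have huniv : (S : Set ℝ) = Set.univ := by
    rw [← hclosed.closure_eq]; exact hdense.closure_eq
  have : r ∈ (S : Set ℝ) := by rw [huniv]; trivial
  exact this

end SmulAux

section LatticeSpanAux

variable {G : Type*} [NormedAddCommGroup G] [Lattice G] [HasSolidNorm G] [IsOrderedAddMonoid G] [NormedSpace ℝ G]

lemma subset_latticeSpan (s : Set G) : s ⊆ latticeSpan s := fun _ hx _ hp _ => hp hx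

lemma latticeSpan_zero (s : Set G) : (0 : G) ∈ latticeSpan s := fun p _ _ => p.zero_mem

lemma latticeSpan_add {s : Set G} {a b : G} (ha : a ∈ latticeSpan s) (hb : b ∈ latticeSpan s) :
    a + b ∈ latticeSpan s := fun p hp hsup => p.add_mem (ha p hp hsup) (hb p hp hsup)

lemma span_le_latticeSpan (s : Set G) : (Submodule.span ℝ s : Set G) ⊆ latticeSpan s := by
  intro x hx
  intro p hp hsup
  have : Submodule.span ℝ s ≤ p := Submodule.span_le.2 hp
  exact this hx

/-- The disjoint complement of a single element, as a submodule. -/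
def lsDisjBand (c : G) : Submodule ℝ G where
  carrier := {w : G | |w| ⊓ |c| = 0}
  zero_mem' := ls_disj_zero
  add_mem' := fun ha hb => ls_disj_add ha hb
  smul_mem' := fun r _ h => ls_disj_smul h r

lemma lsDisjBand_supClosed (c : G) :
    ∀ a ∈ (lsDisjBand c : Set G), ∀ b ∈ (lsDisjBand c : Set G), a ⊔ b ∈ lsDisjBand c :=
  fun _ ha _ hb => ls_disj_sup ha hb

lemma latticeSpan_disj {s : Set G} {c : G} (h : ∀ x ∈ s, |x| ⊓ |c| = 0) :
    ∀ w ∈ latticeSpan s, |w| ⊓ |c| = 0 :=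
  fun w hw => hw (lsDisjBand c) h (lsDisjBand_supClosed c)

end LatticeSpanAux

section BandProjAux

variable {H : Type*} [NormedAddCommGroup H] [Lattice H] [HasSolidNorm H] [IsOrderedAddMonoid H] [NormedSpace ℝ H]
variable {P : H →ₗ[ℝ] H}

lemma bp_mono (hP : IsBandProjection P) {a b : H} (h : a ≤ b) : P a ≤ P b := by
  have h1 : 0 ≤ P (b - a) := hP.pos _ (sub_nonneg.2 h)
  rw [map_sub] at h1
  exact sub_nonneg.1 h1

lemma bp_disj_pos (hP : IsBandProjection P) {w x : H} (hw : 0 ≤ w) (hx : 0 ≤ x) :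
    P w ⊓ (x - P x) = 0 := by
  set d := P w ⊓ (x - P x) with hd
  have hd0 : 0 ≤ d := le_inf (hP.pos w hw) (sub_nonneg.2 (hP.proj_le x hx))
  have hdPw : d ≤ P w := inf_le_left
  have h1 : P (P w - d) ≤ P w - d := hP.proj_le _ (sub_nonneg.2 hdPw)
  rw [map_sub, hP.idem] at h1
  have h2 : d ≤ P d := (sub_le_sub_iff_left (P w)).1 h1
  have h3 : P d ≤ 0 := by
    have h4 : P d ≤ P (x - P x) := bp_mono hP inf_le_right
    rwa [map_sub, hP.idem, sub_self] at h4
  exact le_antisymm (h2.trans h3) hd0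

lemma bp_abs_le (hP : IsBandProjection P) (w : H) : |P w| ≤ P |w| := by
  rw [ls_habs (P w)]
  refine sup_le (bp_mono hP (le_abs_self w)) ?_
  rw [← map_neg]
  exact bp_mono hP (neg_le_abs w)

lemma bp_abs_disj (hP : IsBandProjection P) (w x : H) : |P w| ⊓ |x - P x| = 0 := by
  have hA : 0 ≤ x⁺ - P x⁺ := sub_nonneg.2 (hP.proj_le _ (posPart_nonneg x))
  have hB : 0 ≤ x⁻ - P x⁻ := sub_nonneg.2 (hP.proj_le _ (negPart_nonneg x))
  have h1 : |x - P x| ≤ (x⁺ - P x⁺) + (x⁻ - P x⁻) := by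
    have hxx : x - P x = (x⁺ - P x⁺) - (x⁻ - P x⁻) := by
      conv_lhs => rw [← posPart_sub_negPart x]
      rw [map_sub]; abel
    rw [hxx, sub_eq_add_neg]
    calc |(x⁺ - P x⁺) + -(x⁻ - P x⁻)| ≤ |x⁺ - P x⁺| + |(-(x⁻ - P x⁻))| := abs_add_le _ _
      _ = (x⁺ - P x⁺) + (x⁻ - P x⁻) := by rw [abs_neg, abs_of_nonneg hA, abs_of_nonneg hB]
  refine le_antisymm ?_ (le_inf (abs_nonneg _) (abs_nonneg _))
  calc |P w| ⊓ |x - P x| ≤ P |w| ⊓ ((x⁺ - P x⁺) + (x⁻ - P x⁻)) :=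
        inf_le_inf (bp_abs_le hP w) h1
    _ ≤ P |w| ⊓ (x⁺ - P x⁺) + P |w| ⊓ (x⁻ - P x⁻) :=
        ls_inf_add (hP.pos _ (abs_nonneg w)) hA hB
    _ = 0 := by
        rw [bp_disj_pos hP (abs_nonneg w) (posPart_nonneg x),
          bp_disj_pos hP (abs_nonneg w) (negPart_nonneg x), add_zero]

lemma bp_fix (hP : IsBandProjection P) {a : H} (ha : a ∈ Set.range P) : P a = a := by
  obtain ⟨w, rfl⟩ := ha
  exact hP.idem w

end BandProjAux

section TensorAux

open scoped TensorProduct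

variable {E F G : Type*}
    [NormedAddCommGroup E] [Lattice E] [HasSolidNorm E] [IsOrderedAddMonoid E] [NormedSpace ℝ E]
    [NormedAddCommGroup F] [Lattice F] [HasSolidNorm F] [IsOrderedAddMonoid F] [NormedSpace ℝ F]
    [NormedAddCommGroup G] [Lattice G] [HasSolidNorm G] [IsOrderedAddMonoid G] [NormedSpace ℝ G] [CompleteSpace G]
    {t : E →ₗ[ℝ] F →ₗ[ℝ] G}

lemma ft_pos (ht : IsFremlinProjTensor E F G t) {x : E} {y : F} (hx : 0 ≤ x) (hy : 0 ≤ y) :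
    0 ≤ t x y := by
  have h := ht.abs_tensor x y
  rw [abs_of_nonneg hx, abs_of_nonneg hy] at h
  rw [← h]; exact abs_nonneg _

lemma ft_abs_pos (ht : IsFremlinProjTensor E F G t) (x : E) (y : F) : 0 ≤ t |x| |y| := by
  rw [← ht.abs_tensor]; exact abs_nonneg _

lemma ft_mono_fst (ht : IsFremlinProjTensor E F G t) {u u' : E} {v : F}
    (h : u ≤ u') (hv : 0 ≤ v) : t u v ≤ t u' v := by
  have h1 : 0 ≤ t (u' - u) v := ft_pos ht (sub_nonneg.2 h) hv
  rw [map_sub, LinearMap.sub_apply] at h1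
  exact sub_nonneg.1 h1

lemma ft_disj_fst (ht : IsFremlinProjTensor E F G t) {a a' : E} (b b' : F)
    (hd : |a| ⊓ |a'| = 0) : |t a b| ⊓ |t a' b'| = 0 := by
  rw [ht.abs_tensor, ht.abs_tensor]
  refine le_antisymm ?_ (le_inf (ft_abs_pos ht a b) (ft_abs_pos ht a' b'))
  calc t |a| |b| ⊓ t |a'| |b'| ≤ t (|a| ⊓ |a'|) (|b| ⊔ |b'|) :=
        ht.inf_tensor_le _ _ _ _ (abs_nonneg a) (abs_nonneg a') (abs_nonneg b) (abs_nonneg b')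
    _ = 0 := by rw [hd, map_zero, LinearMap.zero_apply]

lemma ft_disj_snd (ht : IsFremlinProjTensor E F G t) (a a' : E) {b b' : F}
    (hd : |b| ⊓ |b'| = 0) : |t a b| ⊓ |t a' b'| = 0 := by
  rw [ht.abs_tensor, ht.abs_tensor]
  set U := |a| ⊔ |a'| with hU
  have hU0 : 0 ≤ U := le_trans (abs_nonneg a) le_sup_left
  have h1 : t |a| |b| ≤ t U |b| := ft_mono_fst ht le_sup_left (abs_nonneg b)
  have h2 : t |a'| |b'| ≤ t U |b'| := ft_mono_fst ht le_sup_right (abs_nonneg b')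
  have hXkey : t U |b| ⊓ t U |b'| = 0 := by
    have hb2 : |b| + |b'| - |(|b'| - |b|)| = 0 := by
      have h3 := two_nsmul_inf_eq_add_sub_abs_sub |b| |b'|
      rw [hd, smul_zero] at h3
      exact h3.symm
    have habsU : |t U (|b'| - |b|)| = t U |(|b'| - |b|)| := by
      rw [ht.abs_tensor, abs_of_nonneg hU0]
    have hX : 2 • (t U |b| ⊓ t U |b'|) = 0 := by
      rw [two_nsmul_inf_eq_add_sub_abs_sub, ← map_add, ← map_sub (t U), habsU,
        ← map_sub (t U), hb2, map_zero]
    have hX2 : ((2 : ℕ) : ℝ) • (t U |b| ⊓ t U |b'|) = 0 := by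
      rw [Nat.cast_smul_eq_nsmul]; exact hX
    have hX3 := congrArg (fun z : G => ((2 : ℝ))⁻¹ • z) hX2
    simp only [smul_smul, smul_zero] at hX3
    norm_num at hX3
    exact hX3
  refine le_antisymm ?_ (le_inf (ft_abs_pos ht a b) (ft_abs_pos ht a' b'))
  calc t |a| |b| ⊓ t |a'| |b'| ≤ t U |b| ⊓ t U |b'| := inf_le_inf h1 h2
    _ = 0 := hXkey

lemma ft_exists_band_projection (ht : IsFremlinProjTensor E F G t)
    {P : E →ₗ[ℝ] E} {Q : F →ₗ[ℝ] F} (hP : IsBandProjection P) (hQ : IsBandProjection Q) :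
    ∃ R : G →ₗ[ℝ] G, IsBandProjection R ∧
      Set.range R =
        closure (latticeSpan (Set.image2 (fun x y => t x y) (Set.range P) (Set.range Q))) := by
  classical
  obtain ⟨φ, ψ, hφt, hψt, hψφmap⟩ :
      ∃ (φ ψ : TensorProduct ℝ E F →ₗ[ℝ] G),
        (∀ (x : E) (y : F), φ (x ⊗ₜ[ℝ] y) = t x y) ∧
        (∀ (x : E) (y : F), ψ (x ⊗ₜ[ℝ] y) = t (P x) (Q y)) ∧
        (∀ w, ψ w = φ (TensorProduct.map P Q w)) := by
    refine ⟨TensorProduct.lift t, (TensorProduct.lift t).comp (TensorProduct.map P Q),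
      fun x y => TensorProduct.lift.tmul x y, ?_, fun w => rfl⟩
    intro x y
    rw [LinearMap.comp_apply, TensorProduct.map_tmul, TensorProduct.lift.tmul]
  have hsplit : ∀ (x' : E) (y' : F), φ (x' ⊗ₜ[ℝ] y') - ψ (x' ⊗ₜ[ℝ] y')
      = t (x' - P x') y' + t (P x') (y' - Q y') := by
    intro x' y'
    rw [hφt, hψt, map_sub, LinearMap.sub_apply, map_sub]
    abel
  have hdisjPsi : ∀ w w', |ψ w| ⊓ |φ w' - ψ w'| = 0 := by
    intro w w'
    induction w using TensorProduct.induction_on with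
    | zero => rw [map_zero]; exact ls_disj_zero
    | tmul x y =>
      rw [hψt]
      induction w' using TensorProduct.induction_on with
      | zero => rw [map_zero, map_zero, sub_zero]; exact ls_disj_comm ls_disj_zero
      | tmul x' y' =>
        rw [hsplit]
        have hA : |t (x' - P x') y'| ⊓ |t (P x) (Q y)| = 0 := by
          refine ft_disj_fst ht _ _ ?_
          rw [inf_comm]
          exact bp_abs_disj hP x x'
        have hB : |t (P x') (y' - Q y')| ⊓ |t (P x) (Q y)| = 0 := by
          refine ft_disj_snd ht _ _ ?_
          rw [inf_comm]
          exact bp_abs_disj hQ y y'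
        exact ls_disj_comm (ls_disj_add hA hB)
      | add w₁ w₂ h₁ h₂ =>
        have hsum : φ (w₁ + w₂) - ψ (w₁ + w₂) = (φ w₁ - ψ w₁) + (φ w₂ - ψ w₂) := by
          rw [map_add, map_add]; abel
        rw [hsum]
        exact ls_disj_comm (ls_disj_add (ls_disj_comm h₁) (ls_disj_comm h₂))
    | add w₁ w₂ h₁ h₂ => rw [map_add]; exact ls_disj_add h₁ h₂
  have habs_le : ∀ w, |ψ w| ≤ |φ w| := by
    intro w
    have h2 : ψ w + (φ w - ψ w) = φ w := by abel
    have h3 := ls_abs_le_of_disj (hdisjPsi w w)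
    rwa [h2] at h3
  have hnorm : ∀ w, ‖ψ w‖ ≤ ‖φ w‖ := fun w => HasSolidNorm.solid (habs_le w)
  have hker : LinearMap.ker φ ≤ LinearMap.ker ψ := by
    intro w hw
    rw [LinearMap.mem_ker] at hw ⊢
    have h1 := hnorm w
    rw [hw, norm_zero] at h1
    exact norm_le_zero_iff.1 h1
  set N : Submodule ℝ G := LinearMap.range φ with hN
  have hNspan : N = Submodule.span ℝ (Set.image2 (fun x y => t x y) Set.univ Set.univ) := by
    apply le_antisymm
    · rintro g ⟨w, rfl⟩
      induction w using TensorProduct.induction_on with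
      | zero => rw [map_zero]; exact Submodule.zero_mem _
      | tmul x y =>
        rw [hφt]
        exact Submodule.subset_span ⟨x, Set.mem_univ x, y, Set.mem_univ y, rfl⟩
      | add w₁ w₂ h₁ h₂ => rw [map_add]; exact Submodule.add_mem _ h₁ h₂
    · rw [Submodule.span_le]
      rintro g ⟨x, -, y, -, rfl⟩
      exact ⟨x ⊗ₜ[ℝ] y, hφt x y⟩
  have hNdense : Dense (N : Set G) := by
    rw [hNspan]
    exact ht.dense_span
  set ψq : (TensorProduct ℝ E F ⧸ LinearMap.ker φ) →ₗ[ℝ] G :=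
    Submodule.liftQ (LinearMap.ker φ) ψ hker with hψq
  set f0 : N →ₗ[ℝ] G := ψq.comp (LinearMap.quotKerEquivRange φ).symm.toLinearMap with hf0def
  have hf0 : ∀ (w : TensorProduct ℝ E F) (h : φ w ∈ N), f0 ⟨φ w, h⟩ = ψ w := by
    intro w h
    rw [hf0def]
    simp only [LinearMap.comp_apply, LinearEquiv.coe_coe]
    rw [LinearMap.quotKerEquivRange_symm_apply_image]
    rw [hψq, Submodule.mkQ_apply, Submodule.liftQ_apply]
  have hf0b : ∀ g : N, ‖f0 g‖ ≤ 1 * ‖g‖ := by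
    rintro ⟨g, w, rfl⟩
    refine (congrArg norm (hf0 w _)).trans_le ?_
    show ‖ψ w‖ ≤ 1 * ‖φ w‖
    rw [one_mul]
    exact hnorm w
  set fc := LinearMap.mkContinuous f0 1 hf0b with hfc
  set e := N.subtypeL with he
  have hdr : DenseRange ⇑e := by
    have h1 : Set.range ⇑e = (N : Set G) := Subtype.range_coe
    rw [DenseRange, h1]
    exact hNdense
  have hui : IsUniformInducing ⇑e := by
    have hiso : Isometry ⇑e := fun x y => rfl
    exact hiso.isUniformInducing
  obtain ⟨R, hRφ⟩ : ∃ R : G →L[ℝ] G, ∀ w, R (φ w) = ψ w := by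
    refine ⟨fc.extend e, fun w => ?_⟩
    have h1 := ContinuousLinearMap.extend_eq (f := fc) (e := e) hdr hui ⟨φ w, ⟨w, rfl⟩⟩
    have h2 : e (⟨φ w, ⟨w, rfl⟩⟩ : N) = φ w := rfl
    rw [h2] at h1
    rw [h1, hfc, LinearMap.mkContinuous_apply]
    exact hf0 w _
  have hUnivClosed : ∀ s : Set G, IsClosed s → (N : Set G) ⊆ s → ∀ g : G, g ∈ s := by
    intro s hs hsub g
    have h1 : closure (N : Set G) ⊆ s := hs.closure_subset_iff.2 hsub
    rw [hNdense.closure_eq] at h1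
    exact h1 trivial
  have hPP : TensorProduct.map P Q ∘ₗ TensorProduct.map P Q = TensorProduct.map P Q := by
    rw [← TensorProduct.map_comp]
    have hPc : P ∘ₗ P = P := LinearMap.ext hP.idem
    have hQc : Q ∘ₗ Q = Q := LinearMap.ext hQ.idem
    rw [hPc, hQc]
  have hRR : ∀ g : G, R (R g) = R g := by
    refine hUnivClosed {g : G | R (R g) = R g}
      (isClosed_eq (R.continuous.comp R.continuous) R.continuous) ?_
    rintro _ ⟨w, rfl⟩
    show R (R (φ w)) = R (φ w)
    calc R (R (φ w)) = R (ψ w) := by rw [hRφ w]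
      _ = R (φ (TensorProduct.map P Q w)) := by rw [hψφmap]
      _ = ψ (TensorProduct.map P Q w) := hRφ _
      _ = φ (TensorProduct.map P Q (TensorProduct.map P Q w)) := hψφmap _
      _ = φ ((TensorProduct.map P Q ∘ₗ TensorProduct.map P Q) w) := by
          rw [LinearMap.comp_apply]
      _ = φ (TensorProduct.map P Q w) := by rw [hPP]
      _ = ψ w := (hψφmap w).symm
      _ = R (φ w) := (hRφ w).symm
  have hRdisj : ∀ g h : G, |R g| ⊓ |h - R h| = 0 := by
    intro g h
    have hDD : Dense ((N : Set G) ×ˢ (N : Set G)) := hNdense.prod hNdense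
    have hclosed : IsClosed {q : G × G | |R q.1| ⊓ |q.2 - R q.2| = 0} := by
      refine isClosed_eq ?_ continuous_const
      exact (ls_continuous_abs.comp (R.continuous.comp continuous_fst)).inf
        (ls_continuous_abs.comp (continuous_snd.sub (R.continuous.comp continuous_snd)))
    have hsub : ((N : Set G) ×ˢ (N : Set G)) ⊆ {q : G × G | |R q.1| ⊓ |q.2 - R q.2| = 0} := by
      rintro ⟨g₁, g₂⟩ ⟨⟨w, rfl⟩, ⟨w', rfl⟩⟩
      show |R (φ w)| ⊓ |φ w' - R (φ w')| = 0
      rw [hRφ, hRφ]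
      exact hdisjPsi w w'
    have h1 : closure ((N : Set G) ×ˢ (N : Set G)) ⊆ _ := hclosed.closure_subset_iff.2 hsub
    rw [hDD.closure_eq] at h1
    exact h1 (Set.mem_univ (g, h))
  have hpos : ∀ g : G, 0 ≤ g → 0 ≤ R g := by
    intro g hg
    refine ls_nonneg_of_disj (hRdisj g g) ?_
    have h1 : R g + (g - R g) = g := by abel
    rw [h1]; exact hg
  have hple : ∀ g : G, 0 ≤ g → R g ≤ g := by
    intro g hg
    have hv : 0 ≤ g - R g := by
      refine ls_nonneg_of_disj (u := g - R g) (v := R g) ?_ ?_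
      · rw [inf_comm]; exact hRdisj g g
      · have h1 : (g - R g) + R g = g := by abel
        rw [h1]; exact hg
    exact sub_nonneg.1 hv
  refine ⟨R.toLinearMap, ⟨fun x => hRR x, hpos, hple, fun x => hRdisj x x⟩, ?_⟩
  · rw [show (⇑R.toLinearMap) = ⇑R from rfl]
    set S := Set.image2 (fun x y => t x y) (Set.range ⇑P) (Set.range ⇑Q) with hS
    have hWsub : ∀ w, ψ w ∈ latticeSpan S := by
      intro w
      induction w using TensorProduct.induction_on with
      | zero => rw [map_zero]; exact latticeSpan_zero S
      | tmul x y =>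
        rw [hψt]
        exact subset_latticeSpan S ⟨P x, ⟨x, rfl⟩, Q y, ⟨y, rfl⟩, rfl⟩
      | add w₁ w₂ h₁ h₂ => rw [map_add]; exact latticeSpan_add h₁ h₂
    apply Set.Subset.antisymm
    · rintro _ ⟨g, rfl⟩
      show R g ∈ closure (latticeSpan S)
      refine hUnivClosed {g : G | R g ∈ closure (latticeSpan S)}
        (isClosed_closure.preimage R.continuous) ?_ g
      rintro _ ⟨w, rfl⟩
      show R (φ w) ∈ closure (latticeSpan S)
      rw [hRφ]
      exact subset_closure (hWsub w)
    · have hfixS : ∀ s ∈ S, R s = s := by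
        rintro _ ⟨a, ⟨xa, rfl⟩, b, ⟨yb, rfl⟩, rfl⟩
        show R (t (P xa) (Q yb)) = t (P xa) (Q yb)
        have h1 : R (φ (P xa ⊗ₜ[ℝ] Q yb)) = ψ (P xa ⊗ₜ[ℝ] Q yb) := hRφ _
        rw [hφt, hψt, hP.idem, hQ.idem] at h1
        exact h1
      set K : Submodule ℝ G := ⨅ h : G, lsDisjBand (h - R h) with hK
      have hmemK : ∀ g : G, g ∈ K ↔ ∀ h : G, |g| ⊓ |h - R h| = 0 := by
        intro g
        rw [hK, Submodule.mem_iInf]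
        rfl
      have hKsup : ∀ a ∈ (K : Set G), ∀ b ∈ (K : Set G), a ⊔ b ∈ K := by
        intro a ha b hb
        exact (hmemK _).2 fun h => ls_disj_sup ((hmemK a).1 ha h) ((hmemK b).1 hb h)
      have hSK : S ⊆ (K : Set G) := by
        intro s hs
        refine (hmemK s).2 fun h => ?_
        rw [← hfixS s hs]
        exact hRdisj s h
      have hfixW : ∀ w ∈ latticeSpan S, R w = w := by
        intro w hw
        have hwK : w ∈ K := hw K hSK hKsup
        have h1 : |w| ⊓ |w - R w| = 0 := (hmemK w).1 hwK w
        have h2 : |R w| ⊓ |w - R w| = 0 := hRdisj w w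
        have h3 := ls_disj_sub h1 h2
        rw [inf_idem] at h3
        have h4 : w - R w = 0 := by
          have ha : w - R w ≤ 0 := le_trans (le_abs_self _) h3.le
          have hb : -(w - R w) ≤ 0 := le_trans (neg_le_abs _) h3.le
          exact le_antisymm ha (by simpa using hb)
        exact (sub_eq_zero.1 h4).symm
      intro g hg
      have hclosed : IsClosed {g : G | R g = g} := isClosed_eq R.continuous continuous_id
      have h6 : R g = g := (hclosed.closure_subset_iff.2 fun w hw => hfixW w hw) hg
      exact ⟨g, h6⟩

end TensorAux

/-- if the Fremlin tensor product `E ⊗̄ F` (the sublattice of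
`E ⊗̂ F` generated by the elementary tensors) is Dedekind complete and
`(B_α)`, `(C_β)` are dense band decompositions of `E`, `F`, then
`(B_α ⊗̂ C_β)_{(α,β)}` — the closures of the sublattices generated by the
`B_α ⊗ C_β` — is a dense band decomposition of `E ⊗̂ F`. -/
theorem denseBandDecomposition_tensor
    {E F G : Type*}
    [NormedAddCommGroup E] [Lattice E] [HasSolidNorm E] [IsOrderedAddMonoid E] [NormedSpace ℝ E] [CompleteSpace E]
    [NormedAddCommGroup F] [Lattice F] [HasSolidNorm F] [IsOrderedAddMonoid F] [NormedSpace ℝ F] [CompleteSpace F]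
    [NormedAddCommGroup G] [Lattice G] [HasSolidNorm G] [IsOrderedAddMonoid G] [NormedSpace ℝ G] [CompleteSpace G]
    (t : E →ₗ[ℝ] F →ₗ[ℝ] G) (ht : IsFremlinProjTensor E F G t)
    -- `E ⊗̄ F`, the sublattice generated by the elementary tensors,
    -- is Dedekind complete:
    (hDed : ∀ s : Set G,
      s ⊆ latticeSpan (Set.image2 (fun x y => t x y) Set.univ Set.univ) →
      s.Nonempty →
      (∃ b ∈ latticeSpan (Set.image2 (fun x y => t x y) Set.univ Set.univ),
        ∀ x ∈ s, x ≤ b) →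
      ∃ m ∈ latticeSpan (Set.image2 (fun x y => t x y) Set.univ Set.univ),
        (∀ x ∈ s, x ≤ m) ∧
          ∀ b ∈ latticeSpan (Set.image2 (fun x y => t x y) Set.univ Set.univ),
            (∀ x ∈ s, x ≤ b) → m ≤ b)
    {I J : Type*} (B : I → Set E) (C : J → Set F)
    (hB : IsDenseBandDecomposition B) (hC : IsDenseBandDecomposition C) :
    IsDenseBandDecomposition
      (fun p : I × J => closure (latticeSpan (Set.image2 (fun x y => t x y) (B p.1) (C p.2)))) := by
  classical
  obtain ⟨hB1, hB2, hB3⟩ := hB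
  obtain ⟨hC1, hC2, hC3⟩ := hC
  refine ⟨?_, ?_, ?_⟩
  · -- band projections exist
    rintro ⟨α, β⟩
    obtain ⟨P, hP, hPr⟩ := hB1 α
    obtain ⟨Q, hQ, hQr⟩ := hC1 β
    obtain ⟨R, hR1, hR2⟩ := ft_exists_band_projection ht hP hQ
    refine ⟨R, hR1, ?_⟩
    rw [hR2, hPr, hQr]
  · -- pairwise disjointness
    rintro ⟨α, β⟩ ⟨α', β'⟩ hne a ha b hb
    have hel : ∀ u ∈ Set.image2 (fun x y => t x y) (B α) (C β),
        ∀ v ∈ Set.image2 (fun x y => t x y) (B α') (C β'), |u| ⊓ |v| = 0 := by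
      rintro _ ⟨x, hx, y, hy, rfl⟩ _ ⟨x', hx', y', hy', rfl⟩
      by_cases hα : α = α'
      · subst hα
        have hβ : β ≠ β' := fun h => hne (by rw [h])
        exact ft_disj_snd ht x x' (hC2 β β' hβ y hy y' hy')
      · exact ft_disj_fst ht y y' (hB2 α α' hα x hx x' hx')
    have hstep1 : ∀ w ∈ latticeSpan (Set.image2 (fun x y => t x y) (B α) (C β)),
        ∀ v ∈ Set.image2 (fun x y => t x y) (B α') (C β'), |w| ⊓ |v| = 0 := by
      intro w hw v hv
      exact latticeSpan_disj (fun u hu => hel u hu v hv) w hw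
    have hstep2 : ∀ w ∈ latticeSpan (Set.image2 (fun x y => t x y) (B α) (C β)),
        ∀ v ∈ latticeSpan (Set.image2 (fun x y => t x y) (B α') (C β')), |w| ⊓ |v| = 0 := by
      intro w hw v hv
      rw [inf_comm]
      exact latticeSpan_disj (c := w) (fun u hu => by
        rw [inf_comm]; exact hstep1 w hw u hu) v hv
    have hclosed : IsClosed {q : G × G | |q.1| ⊓ |q.2| = 0} :=
      isClosed_eq ((ls_continuous_abs.comp continuous_fst).inf
        (ls_continuous_abs.comp continuous_snd)) continuous_const
    have hsub : (latticeSpan (Set.image2 (fun x y => t x y) (B α) (C β))) ×ˢ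
        (latticeSpan (Set.image2 (fun x y => t x y) (B α') (C β'))) ⊆
        {q : G × G | |q.1| ⊓ |q.2| = 0} := by
      rintro ⟨u, v⟩ ⟨hu, hv⟩
      exact hstep2 u hu v hv
    have hcl : closure ((latticeSpan (Set.image2 (fun x y => t x y) (B α) (C β))) ×ˢ
        (latticeSpan (Set.image2 (fun x y => t x y) (B α') (C β')))) ⊆
        {q : G × G | |q.1| ⊓ |q.2| = 0} := hclosed.closure_subset_iff.2 hsub
    rw [closure_prod_eq] at hcl
    have ha' : a ∈ closure (latticeSpan (Set.image2 (fun x y => t x y) (B α) (C β))) := ha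
    have hb' : b ∈ closure (latticeSpan (Set.image2 (fun x y => t x y) (B α') (C β'))) := hb
    have h9 : (a, b) ∈ {q : G × G | |q.1| ⊓ |q.2| = 0} := hcl ⟨ha', hb'⟩
    exact h9
  · -- density
    set M : Submodule ℝ G := Submodule.span ℝ
      (⋃ p : I × J, closure (latticeSpan (Set.image2 (fun x y => t x y) (B p.1) (C p.2)))) with hM
    have hcross : ∀ (x : E) (y : F), ‖t x y‖ ≤ 1 * ‖x‖ * ‖y‖ := by
      intro x y
      rw [ht.cross_norm, one_mul]
    set T := LinearMap.mkContinuous₂ t 1 hcross with hT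
    have hTt : ∀ (x : E) (y : F), T x y = t x y := fun x y =>
      LinearMap.mkContinuous₂_apply t hcross x y
    have hcont : Continuous fun q : E × F => T q.1 q.2 := T.isBoundedBilinearMap.continuous
    have hmem : ∀ x ∈ Submodule.span ℝ (⋃ i, B i), ∀ y ∈ Submodule.span ℝ (⋃ j, C j),
        t x y ∈ M := by
      intro x hx
      induction hx using Submodule.span_induction with
      | mem x hx =>
        intro y hy
        obtain ⟨sB, ⟨i, rfl⟩, hxB⟩ := hx
        induction hy using Submodule.span_induction with
        | mem y hy =>
          obtain ⟨sC, ⟨j, rfl⟩, hyC⟩ := hy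
          refine Submodule.subset_span ?_
          refine Set.mem_iUnion.2 ⟨(i, j), ?_⟩
          refine subset_closure ?_
          exact subset_latticeSpan _ ⟨x, hxB, y, hyC, rfl⟩
        | zero => rw [map_zero]; exact Submodule.zero_mem M
        | add y₁ y₂ _ _ h₁ h₂ => rw [map_add]; exact Submodule.add_mem M h₁ h₂
        | smul r y _ h => rw [map_smul]; exact Submodule.smul_mem M r h
      | zero => intro y hy; rw [map_zero, LinearMap.zero_apply]; exact Submodule.zero_mem M
      | add x₁ x₂ _ _ h₁ h₂ =>
        intro y hy
        rw [map_add, LinearMap.add_apply]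
        exact Submodule.add_mem M (h₁ y hy) (h₂ y hy)
      | smul r x _ h =>
        intro y hy
        rw [map_smul, LinearMap.smul_apply]
        exact Submodule.smul_mem M r (h y hy)
    have hel : ∀ (x : E) (y : F), t x y ∈ closure (M : Set G) := by
      intro x y
      have hxy : (x, y) ∈ closure ((Submodule.span ℝ (⋃ i, B i) : Set E) ×ˢ
          (Submodule.span ℝ (⋃ j, C j) : Set F)) := by
        rw [closure_prod_eq]
        exact ⟨by rw [hB3.closure_eq]; trivial, by rw [hC3.closure_eq]; trivial⟩
      have himg : (fun q : E × F => T q.1 q.2) '' ((Submodule.span ℝ (⋃ i, B i) : Set E) ×ˢ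
          (Submodule.span ℝ (⋃ j, C j) : Set F)) ⊆ (M : Set G) := by
        rintro _ ⟨⟨x', y'⟩, ⟨hx', hy'⟩, rfl⟩
        show T x' y' ∈ (M : Set G)
        rw [hTt]
        exact hmem x' hx' y' hy'
      have h1 : T x y ∈ closure ((fun q : E × F => T q.1 q.2) ''
          ((Submodule.span ℝ (⋃ i, B i) : Set E) ×ˢ (Submodule.span ℝ (⋃ j, C j) : Set F))) := by
        have h2 := image_closure_subset_closure_image
          (s := (Submodule.span ℝ (⋃ i, B i) : Set E) ×ˢ (Submodule.span ℝ (⋃ j, C j) : Set F))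
          (f := fun q : E × F => T q.1 q.2) hcont
        exact h2 ⟨(x, y), hxy, rfl⟩
      rw [← hTt]
      exact closure_mono himg h1
    have hspanA : (Submodule.span ℝ (Set.image2 (fun x y => t x y) Set.univ Set.univ) : Set G) ⊆
        closure (M : Set G) := by
      have h4 : Submodule.span ℝ (Set.image2 (fun x y => t x y) Set.univ Set.univ) ≤
          M.topologicalClosure := by
        rw [Submodule.span_le]
        rintro _ ⟨x, -, y, -, rfl⟩
        show t x y ∈ (M.topologicalClosure : Set G)
        rw [Submodule.topologicalClosure_coe]
        exact hel x y
      intro g hg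
      rw [← Submodule.topologicalClosure_coe]
      exact h4 hg
    have huniv : closure (M : Set G) = Set.univ := by
      apply Set.eq_univ_of_univ_subset
      calc Set.univ
          = closure (Submodule.span ℝ (Set.image2 (fun x y => t x y) Set.univ Set.univ) : Set G) :=
            (ht.dense_span.closure_eq).symm
        _ ⊆ closure (closure (M : Set G)) := closure_mono hspanA
        _ = closure (M : Set G) := closure_closure
    show Dense (M : Set G)
    rw [dense_iff_closure_eq]
    exact huniv
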